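/- Let G be a quasi-finite moment graph and A → B → C a sequence in Z-mod^f with A, B, C flabby. Then the sequence is short exact (i.e., 0 → A^I → B^I → C^I → 0 exact for all open I) if and only if for every vertex x the sequence 0 → A^{[x]} → B^{[x]} → C^{[x]} → 0 of Z-modules is short exact. -/

import Mathlib

open scoped TensorProduct

/-- `(S, ι)` is a symmetric algebra of the `k`-vector space `V`. -/
structure IsSymmAlg (k V S : Type) [Field k] [AddCommGroup V] [Module k V]
    [CommRing S] [Algebra k S] (ι : V →ₗ[k] S) : Prop where
  univ : ∀ (A : Type) [CommRing A] [Algebra k A] (φ : V →ₗ[k] A),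
    ∃! ψ : S →ₐ[k] A, ∀ v, ψ (ι v) = φ v

/-- A moment graph over the `k`-vector space `V`: a graph with a partial order on
vertices such that linked vertices are comparable (each edge is recorded with
`src ≤ tgt`), and a labelling of edges by (generators of) one-dimensional
subspaces of `V`. -/
structure MomentGraph (k V : Type) [Field k] [AddCommGroup V] [Module k V] where
  Vertex : Type
  Edge : Type
  src : Edge → Vertex
  tgt : Edge → Vertex
  le : Vertex → Vertex → Prop
  le_refl : ∀ x, le x x
  le_trans : ∀ x y z, le x y → le y z → le x z
  le_antisymm : ∀ x y, le x y → le y x → x = y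
  src_le_tgt : ∀ e, le (src e) (tgt e)
  src_ne_tgt : ∀ e, src e ≠ tgt e
  label : Edge → V
  label_ne : ∀ e, label e ≠ 0

variable {k V : Type} [Field k] [AddCommGroup V] [Module k V]

/-- The space of sections over a subgraph `I` of the structure sheaf of `G`, with
entries in a commutative ring `A` receiving the labels via `σ : V → A`: tuples
`(z_x)_{x ∈ I}` (encoded as functions vanishing off `I`) with
`z_x ≡ z_y mod σ(α)` for each edge `x —α— y` of `I`. -/
def secAlg (G : MomentGraph k V) (A : Type) [CommRing A] (σ : V → A)
    (I : Set G.Vertex) : Submodule A (G.Vertex → A) where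
  carrier := {z | (∀ x ∉ I, z x = 0) ∧ ∀ e, G.src e ∈ I → G.tgt e ∈ I →
      z (G.src e) - z (G.tgt e) ∈ Ideal.span {σ (G.label e)}}
  add_mem' := by
    intro a b ha hb
    refine ⟨fun x hx => ?_, fun e hs ht => ?_⟩
    · simp [ha.1 x hx, hb.1 x hx]
    · have h : (a + b) (G.src e) - (a + b) (G.tgt e)
          = (a (G.src e) - a (G.tgt e)) + (b (G.src e) - b (G.tgt e)) := by
        simp only [Pi.add_apply]; ring
      rw [h]
      exact (Ideal.span {σ (G.label e)}).add_mem (ha.2 e hs ht) (hb.2 e hs ht)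
  zero_mem' := by
    refine ⟨fun x _ => rfl, fun e _ _ => ?_⟩
    simp
  smul_mem' := by
    intro c a ha
    refine ⟨fun x hx => by simp [ha.1 x hx], fun e hs ht => ?_⟩
    have h : (c • a) (G.src e) - (c • a) (G.tgt e)
        = c * (a (G.src e) - a (G.tgt e)) := by
      simp only [Pi.smul_apply, smul_eq_mul]; ring
    rw [h]
    exact Ideal.mul_mem_left _ c (ha.2 e hs ht)

/-- The structure algebra `Z(G)` of `G` with coefficients in `S` (via `ι`). -/
def structAlg (G : MomentGraph k V) (S : Type) [CommRing S] (σ : V → S) :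
    Submodule S (G.Vertex → S) := secAlg G S σ Set.univ

/-- Restriction of tuples to a subgraph `I` (extension by zero off `I`). -/
noncomputable def restrictTo {A : Type} [CommRing A] {X : Type} (I : Set X) :
    (X → A) →ₗ[A] (X → A) where
  toFun z := I.indicator z
  map_add' a b := by
    funext x
    classical
    by_cases hx : x ∈ I <;> simp [Set.indicator, hx]
  map_smul' c a := by
    funext x
    classical
    by_cases hx : x ∈ I <;> simp [Set.indicator, hx]

/-- `Z(G)^I`: the image of the restriction map `Z(G) → Z(I)`. -/
noncomputable def structAlgRes (G : MomentGraph k V) (S : Type) [CommRing S]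
    (σ : V → S) (I : Set G.Vertex) : Submodule S (G.Vertex → S) :=
  Submodule.map (restrictTo I) (structAlg G S σ)

/-- The structure algebra `Z = Z(G)` as a subalgebra of `∏_{x} S` (pointwise
operations). -/
def structSubalg (G : MomentGraph k V) (S : Type) [CommRing S] (σ : V → S) :
    Subalgebra S (G.Vertex → S) where
  carrier := {z | ∀ e, z (G.src e) - z (G.tgt e) ∈ Ideal.span {σ (G.label e)}}
  add_mem' := by
    intro a b ha hb e
    have h : (a + b) (G.src e) - (a + b) (G.tgt e)
        = (a (G.src e) - a (G.tgt e)) + (b (G.src e) - b (G.tgt e)) := by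
      simp only [Pi.add_apply]; ring
    rw [h]; exact (Ideal.span _).add_mem (ha e) (hb e)
  mul_mem' := by
    intro a b ha hb e
    have h : (a * b) (G.src e) - (a * b) (G.tgt e)
        = a (G.src e) * (b (G.src e) - b (G.tgt e))
          + b (G.tgt e) * (a (G.src e) - a (G.tgt e)) := by
      simp only [Pi.mul_apply]; ring
    rw [h]
    exact (Ideal.span _).add_mem (Ideal.mul_mem_left _ _ (hb e))
      (Ideal.mul_mem_left _ _ (ha e))
  algebraMap_mem' := by
    intro c e
    simp
  one_mem' := by
    intro e; simp
  zero_mem' := by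
    intro e; simp

/-- Quasi-finiteness of a moment graph `G`: for every `γ ∈ V` (with `S·γ`
prime) and every finite subgraph `I`, the natural map
`Z(G)^I ⊗_S S_γ → Z_γ(I)` is a bijection. -/
def QuasiFinite {S : Type} [CommRing S] [Algebra k S] (ι : V →ₗ[k] S)
    (G : MomentGraph k V) : Prop :=
  ∀ (γ : V), γ ≠ 0 → ∀ (hp : (Ideal.span {ι γ}).IsPrime)
    (I : Set G.Vertex), I.Finite →
    letI := hp
    ∃ f : (structAlgRes G S ι I) ⊗[S] (Localization (Ideal.span {ι γ}).primeCompl)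
        →ₗ[S] (G.Vertex → Localization (Ideal.span {ι γ}).primeCompl),
      (∀ (m : structAlgRes G S ι I)
          (s : Localization (Ideal.span {ι γ}).primeCompl),
        f (m ⊗ₜ s) = fun x => s * algebraMap S _ (m.val x))
      ∧ Function.Injective f
      ∧ LinearMap.range f = Submodule.restrictScalars S
          (secAlg G (Localization (Ideal.span {ι γ}).primeCompl)
            (fun v => algebraMap S _ (ι v)) I)

section CoordFramework

open scoped Classical

/-- Projection of a tuple onto the coordinates in `I` (zero off `I`). -/
noncomputable def projTo {k V : Type} [Field k] [AddCommGroup V] [Module k V]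
    {S : Type} [CommRing S] (G : MomentGraph k V) (W : G.Vertex → Type)
    [∀ x, AddCommGroup (W x)] [∀ x, Module S (W x)] (I : Set G.Vertex) :
    (∀ x, W x) →ₗ[S] (∀ x, W x) where
  toFun m x := if x ∈ I then m x else 0
  map_add' a b := by
    funext x
    by_cases hx : x ∈ I <;> simp [hx]
  map_smul' c a := by
    funext x
    by_cases hx : x ∈ I <;> simp [hx]

/-- `M` (a submodule of `∏_x M_Q^x`) is an object of `Z-mod^f`, coordinatized
via its canonical decomposition: it is stable under the coordinatewise action
of the structure algebra `Z`, finitely generated over `S`, and has finite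
support. -/
def IsCoordModF {k V : Type} [Field k] [AddCommGroup V] [Module k V]
    {S : Type} [CommRing S] [Algebra k S] (G : MomentGraph k V)
    (Q : Type) [CommRing Q] [Algebra S Q] (W : G.Vertex → Type)
    [∀ x, AddCommGroup (W x)] [∀ x, Module Q (W x)] [∀ x, Module S (W x)]
    (ι : V →ₗ[k] S) (M : Submodule S (∀ x, W x)) : Prop :=
  (∀ z : G.Vertex → S, z ∈ structSubalg G S ι → ∀ m ∈ M,
      (fun x => algebraMap S Q (z x) • m x) ∈ M)
  ∧ Module.Finite S M
  ∧ {x : G.Vertex | ∃ m ∈ M, m x ≠ 0}.Finite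

/-- `M^J`: the projection of `M` onto the coordinates in `J`. -/
noncomputable def projMod {k V : Type} [Field k] [AddCommGroup V] [Module k V]
    {S : Type} [CommRing S] (G : MomentGraph k V) (W : G.Vertex → Type)
    [∀ x, AddCommGroup (W x)] [∀ x, Module S (W x)]
    (M : Submodule S (∀ x, W x)) (J : Set G.Vertex) :
    Submodule S (∀ x, W x) :=
  Submodule.map (projTo G W J) M

/-- The stalk `M^x`. -/
noncomputable def stalkMod {k V : Type} [Field k] [AddCommGroup V] [Module k V]
    {S : Type} [CommRing S] (G : MomentGraph k V) (W : G.Vertex → Type)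
    [∀ x, AddCommGroup (W x)] [∀ x, Module S (W x)]
    (M : Submodule S (∀ x, W x)) (x : G.Vertex) :
    Submodule S (∀ y, W y) :=
  projMod G W M {x}

/-- `M(E) = Z(E)·M^{x,y}` for an edge `E : x —α— y`. -/
noncomputable def edgeMod {k V : Type} [Field k] [AddCommGroup V] [Module k V]
    {S : Type} [CommRing S] [Algebra k S] (G : MomentGraph k V)
    (Q : Type) [CommRing Q] [Algebra S Q] (W : G.Vertex → Type)
    [∀ x, AddCommGroup (W x)] [∀ x, Module Q (W x)] [∀ x, Module S (W x)]
    (ι : V →ₗ[k] S) (M : Submodule S (∀ x, W x)) (e : G.Edge) :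
    Submodule S (∀ x, W x) :=
  Submodule.span S
    {p | ∃ z : S × S, z.1 - z.2 ∈ Ideal.span {ι (G.label e)} ∧
      ∃ m ∈ projMod G W M {G.src e, G.tgt e},
        p = fun x => algebraMap S Q (if x = G.src e then z.1 else z.2) • m x}

/-- Sign twist at the vertex `y` (used to form pushouts). -/
noncomputable def twistAt {k V : Type} [Field k] [AddCommGroup V] [Module k V]
    {S : Type} [CommRing S] (G : MomentGraph k V) (W : G.Vertex → Type)
    [∀ x, AddCommGroup (W x)] [∀ x, Module S (W x)] (y : G.Vertex) :
    (∀ x, W x) →ₗ[S] (∀ x, W x) where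
  toFun m x := if x = y then -m x else m x
  map_add' a b := by
    funext x
    by_cases hx : x = y <;> simp [hx] <;> abel
  map_smul' c a := by
    funext x
    by_cases hx : x = y <;> simp [hx]

/-- `M^x ⊕ M^y` for an edge `E : x — y` (internal sum of the stalks). -/
noncomputable def pairMod {k V : Type} [Field k] [AddCommGroup V] [Module k V]
    {S : Type} [CommRing S] (G : MomentGraph k V) (W : G.Vertex → Type)
    [∀ x, AddCommGroup (W x)] [∀ x, Module S (W x)]
    (M : Submodule S (∀ x, W x)) (e : G.Edge) :
    Submodule S (∀ x, W x) :=
  stalkMod G W M (G.src e) ⊔ stalkMod G W M (G.tgt e)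

/-- The submodule of `M^x ⊕ M^y` one divides by to obtain the pushout
`L(M)^E` of `M^x ← M(E) → M^y`. -/
noncomputable def pushKer {k V : Type} [Field k] [AddCommGroup V] [Module k V]
    {S : Type} [CommRing S] [Algebra k S] (G : MomentGraph k V)
    (Q : Type) [CommRing Q] [Algebra S Q] (W : G.Vertex → Type)
    [∀ x, AddCommGroup (W x)] [∀ x, Module Q (W x)] [∀ x, Module S (W x)]
    (ι : V →ₗ[k] S) (M : Submodule S (∀ x, W x)) (e : G.Edge) :
    Submodule S (pairMod G W M e) :=
  Submodule.comap (pairMod G W M e).subtype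
    (Submodule.map (twistAt G W (G.tgt e)) (edgeMod G Q W ι M e))

/-- The sections `Γ(L(M))` of the localized sheaf, described by local relations:
tuples `(m_x)` with `m_x ∈ M^x` for all `x` and `(m_x, m_y) ∈ M(E)` for all
edges `E : x — y`. -/
noncomputable def locSections {k V : Type} [Field k] [AddCommGroup V] [Module k V]
    {S : Type} [CommRing S] [Algebra k S] (G : MomentGraph k V)
    (Q : Type) [CommRing Q] [Algebra S Q] (W : G.Vertex → Type)
    [∀ x, AddCommGroup (W x)] [∀ x, Module Q (W x)] [∀ x, Module S (W x)]
    (ι : V →ₗ[k] S) (M : Submodule S (∀ x, W x)) :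
    Set (∀ x, W x) :=
  {m | (∀ x, projTo (S := S) G W {x} m ∈ stalkMod G W M x)
    ∧ ∀ e : G.Edge,
        projTo (S := S) G W {G.src e, G.tgt e} m ∈ edgeMod G Q W ι M e}

/-- `M` is determined by local relations, i.e. the unit `M → Γ(L(M))` is an
isomorphism. -/
def DetByLocal {k V : Type} [Field k] [AddCommGroup V] [Module k V]
    {S : Type} [CommRing S] [Algebra k S] (G : MomentGraph k V)
    (Q : Type) [CommRing Q] [Algebra S Q] (W : G.Vertex → Type)
    [∀ x, AddCommGroup (W x)] [∀ x, Module Q (W x)] [∀ x, Module S (W x)]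
    (ι : V →ₗ[k] S) (M : Submodule S (∀ x, W x)) : Prop :=
  (M : Set (∀ x, W x)) = locSections G Q W ι M

/-- Open (downwardly closed) subgraphs for the Alexandrov topology. -/
def IsOpenSub {k V : Type} [Field k] [AddCommGroup V] [Module k V]
    (G : MomentGraph k V) (I : Set G.Vertex) : Prop :=
  ∀ x y, G.le x y → y ∈ I → x ∈ I

/-- `M` is flabby: `M^I` is determined by local relations for every open `I`. -/
def Flabby {k V : Type} [Field k] [AddCommGroup V] [Module k V]
    {S : Type} [CommRing S] [Algebra k S] (G : MomentGraph k V)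
    (Q : Type) [CommRing Q] [Algebra S Q] (W : G.Vertex → Type)
    [∀ x, AddCommGroup (W x)] [∀ x, Module Q (W x)] [∀ x, Module S (W x)]
    (ι : V →ₗ[k] S) (M : Submodule S (∀ x, W x)) : Prop :=
  ∀ I : Set G.Vertex, IsOpenSub G I → DetByLocal G Q W ι (projMod G W M I)

/-- Tuples supported at the single vertex `x`. -/
def vertexOnly {k V : Type} [Field k] [AddCommGroup V] [Module k V]
    {S : Type} [CommRing S] (G : MomentGraph k V) (W : G.Vertex → Type)
    [∀ x, AddCommGroup (W x)] [∀ x, Module S (W x)] (x : G.Vertex) :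
    Submodule S (∀ y, W y) where
  carrier := {m | ∀ y, y ≠ x → m y = 0}
  add_mem' := by
    intro a b ha hb y hy
    simp [ha y hy, hb y hy]
  zero_mem' := fun y _ => rfl
  smul_mem' := by
    intro c a ha y hy
    simp [ha y hy]

/-- `M^{[x]} = ker(M^{≤x} → M^{<x})`: elements of `M^{≤x}` supported on `{x}`. -/
noncomputable def grKernel {k V : Type} [Field k] [AddCommGroup V] [Module k V]
    {S : Type} [CommRing S] (G : MomentGraph k V) (W : G.Vertex → Type)
    [∀ x, AddCommGroup (W x)] [∀ x, Module S (W x)]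
    (M : Submodule S (∀ x, W x)) (x : G.Vertex) :
    Submodule S (∀ y, W y) :=
  projMod G W M {y | G.le y x} ⊓ vertexOnly G W x

end CoordFramework


section Stmt13

open scoped Classical

/-- Coordinatewise application of a family of maps (morphisms of `Z-mod^f`
are coordinatewise on the canonical decompositions). -/
noncomputable def pmap {k V : Type} [Field k] [AddCommGroup V] [Module k V]
    {S : Type} [CommRing S] (G : MomentGraph k V)
    (Q : Type) [CommRing Q] [Algebra S Q]
    (WA WB : G.Vertex → Type)
    [∀ x, AddCommGroup (WA x)] [∀ x, Module Q (WA x)]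
    [∀ x, Module S (WA x)] [∀ x, IsScalarTower S Q (WA x)]
    [∀ x, AddCommGroup (WB x)] [∀ x, Module Q (WB x)]
    [∀ x, Module S (WB x)] [∀ x, IsScalarTower S Q (WB x)]
    (φ : ∀ x, WA x →ₗ[Q] WB x) : (∀ x, WA x) →ₗ[S] (∀ x, WB x) where
  toFun m := fun x => φ x (m x)
  map_add' a b := by
    funext x
    simp
  map_smul' c a := by
    funext x
    simp [LinearMap.map_smul_of_tower]


section AuxProj

open scoped Classical

variable {k V : Type} [Field k] [AddCommGroup V] [Module k V]
variable {S : Type} [CommRing S]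
variable {G : MomentGraph k V}

lemma projTo_apply (W : G.Vertex → Type) [∀ x, AddCommGroup (W x)]
    [∀ x, Module S (W x)] (I : Set G.Vertex) (m : ∀ x, W x) (y : G.Vertex) :
    projTo (S := S) G W I m y = if y ∈ I then m y else 0 := rfl

lemma projTo_projTo (W : G.Vertex → Type) [∀ x, AddCommGroup (W x)]
    [∀ x, Module S (W x)] (I J : Set G.Vertex) (m : ∀ x, W x) :
    projTo (S := S) G W J (projTo (S := S) G W I m)
      = projTo (S := S) G W (I ∩ J) m := by
  funext y
  by_cases hJ : y ∈ J <;> by_cases hI : y ∈ I <;>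
    simp [projTo_apply, hJ, hI, Set.mem_inter_iff]

lemma projTo_projTo_of_subset (W : G.Vertex → Type) [∀ x, AddCommGroup (W x)]
    [∀ x, Module S (W x)] {I J : Set G.Vertex} (h : J ⊆ I) (m : ∀ x, W x) :
    projTo (S := S) G W J (projTo (S := S) G W I m) = projTo (S := S) G W J m := by
  rw [projTo_projTo, Set.inter_eq_self_of_subset_right h]

variable {W : G.Vertex → Type} [∀ x, AddCommGroup (W x)] [∀ x, Module S (W x)]

lemma mem_projMod_iff {M : Submodule S (∀ x, W x)} {I : Set G.Vertex}
    {m : ∀ x, W x} :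
    m ∈ projMod G W M I ↔ ∃ a ∈ M, projTo (S := S) G W I a = m :=
  Submodule.mem_map

lemma projMod_vanish {M : Submodule S (∀ x, W x)} {I : Set G.Vertex}
    {m : ∀ x, W x} (hm : m ∈ projMod G W M I) {y : G.Vertex} (hy : y ∉ I) :
    m y = 0 := by
  obtain ⟨a, _, rfl⟩ := mem_projMod_iff.mp hm
  simp [projTo_apply, hy]

lemma projMod_vanish_supp {M : Submodule S (∀ x, W x)} {I : Set G.Vertex}
    {m : ∀ x, W x} (hm : m ∈ projMod G W M I) {y : G.Vertex}
    (hy : ∀ n ∈ M, n y = 0) : m y = 0 := by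
  obtain ⟨a, ha, rfl⟩ := mem_projMod_iff.mp hm
  by_cases h : y ∈ I <;> simp [projTo_apply, h, hy a ha]

lemma projTo_mem_projMod {M : Submodule S (∀ x, W x)} {I J : Set G.Vertex}
    (hJI : J ⊆ I) {m : ∀ x, W x} (hm : m ∈ projMod G W M I) :
    projTo (S := S) G W J m ∈ projMod G W M J := by
  obtain ⟨a, ha, rfl⟩ := mem_projMod_iff.mp hm
  rw [projTo_projTo_of_subset W hJI]
  exact ⟨a, ha, rfl⟩

lemma projTo_self_of_mem {M : Submodule S (∀ x, W x)} {I : Set G.Vertex}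
    {m : ∀ x, W x} (hm : m ∈ projMod G W M I) :
    projTo (S := S) G W I m = m := by
  obtain ⟨a, _, rfl⟩ := mem_projMod_iff.mp hm
  rw [projTo_projTo, Set.inter_self]

lemma mem_vertexOnly_iff {x : G.Vertex} {m : ∀ y, W y} :
    m ∈ vertexOnly (S := S) G W x ↔ ∀ y, y ≠ x → m y = 0 := Iff.rfl

lemma mem_grKernel_iff {M : Submodule S (∀ x, W x)} {x : G.Vertex}
    {m : ∀ y, W y} :
    m ∈ grKernel G W M x
      ↔ m ∈ projMod G W M {y | G.le y x} ∧ ∀ y, y ≠ x → m y = 0 := by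
  rw [grKernel, Submodule.mem_inf, mem_vertexOnly_iff]

/-- Easy direction of the kernel identification: an element of `M^I`
supported at `x ∈ I` lies in `M^{[x]}`. -/
lemma mem_grKernel_of_projMod {M : Submodule S (∀ x, W x)} {I : Set G.Vertex}
    (hI : IsOpenSub G I) {x : G.Vertex} (hx : x ∈ I) {m : ∀ y, W y}
    (hm : m ∈ projMod G W M I) (hsupp : ∀ y, y ≠ x → m y = 0) :
    m ∈ grKernel G W M x := by
  refine mem_grKernel_iff.mpr ⟨?_, hsupp⟩
  obtain ⟨a, ha, rfl⟩ := mem_projMod_iff.mp hm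
  refine ⟨a, ha, ?_⟩
  funext y
  by_cases hyx : G.le y x
  · have hyI : y ∈ I := hI y x hyx hx
    simp [projTo_apply, hyx, hyI]
  · have hyne : y ≠ x := fun h => hyx (h ▸ G.le_refl x)
    have := hsupp y hyne
    by_cases hyI : y ∈ I <;>
      simpa [projTo_apply, hyx, hyI] using this.symm

end AuxProj

section AuxPmap

open scoped Classical

variable {k V : Type} [Field k] [AddCommGroup V] [Module k V]
variable {S : Type} [CommRing S]
variable {G : MomentGraph k V}
variable (Q : Type) [CommRing Q] [Algebra S Q]
variable {WA WB : G.Vertex → Type}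
variable [∀ x, AddCommGroup (WA x)] [∀ x, Module Q (WA x)]
variable [∀ x, Module S (WA x)] [∀ x, IsScalarTower S Q (WA x)]
variable [∀ x, AddCommGroup (WB x)] [∀ x, Module Q (WB x)]
variable [∀ x, Module S (WB x)] [∀ x, IsScalarTower S Q (WB x)]

lemma pmap_apply (φ : ∀ x, WA x →ₗ[Q] WB x) (m : ∀ x, WA x) (y : G.Vertex) :
    pmap (S := S) G Q WA WB φ m y = φ y (m y) := rfl

lemma pmap_projTo (φ : ∀ x, WA x →ₗ[Q] WB x) (J : Set G.Vertex) (m : ∀ x, WA x) :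
    pmap (S := S) G Q WA WB φ (projTo (S := S) G WA J m)
      = projTo (S := S) G WB J (pmap (S := S) G Q WA WB φ m) := by
  funext y
  by_cases h : y ∈ J <;> simp [pmap_apply, projTo_apply, h]

lemma pmap_mem_projMod {A : Submodule S (∀ x, WA x)} {B : Submodule S (∀ x, WB x)}
    (φ : ∀ x, WA x →ₗ[Q] WB x) (hφ : ∀ m ∈ A, pmap (S := S) G Q WA WB φ m ∈ B)
    {I : Set G.Vertex} {m : ∀ x, WA x} (hm : m ∈ projMod G WA A I) :
    pmap (S := S) G Q WA WB φ m ∈ projMod G WB B I := by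
  obtain ⟨a, ha, rfl⟩ := mem_projMod_iff.mp hm
  rw [pmap_projTo]
  exact ⟨_, hφ a ha, rfl⟩

end AuxPmap

section AuxFlabby

open scoped Classical

variable {k V : Type} [Field k] [AddCommGroup V] [Module k V]
variable {S : Type} [CommRing S] [Algebra k S]
variable {G : MomentGraph k V}
variable (Q : Type) [CommRing Q] [Algebra S Q]
variable {W : G.Vertex → Type}
variable [∀ x, AddCommGroup (W x)] [∀ x, Module Q (W x)] [∀ x, Module S (W x)]
variable (ι : V →ₗ[k] S)

/-- Hard direction of the kernel identification, using flabbiness: if `x ∈ I`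
is maximal among the coordinates of `I` where `M` lives, then
`M^{[x]} ⊆ M^I`. -/
lemma grKernel_le_projMod {M : Submodule S (∀ x, W x)}
    (hfl : Flabby G Q W ι M) {I : Set G.Vertex} (hI : IsOpenSub G I)
    {x : G.Vertex} (hx : x ∈ I)
    (hmax : ∀ y, y ∈ I → G.le x y → y ≠ x → ∀ n ∈ M, n y = 0)
    {m : ∀ y, W y} (hm : m ∈ grKernel G W M x) :
    m ∈ projMod G W M I := by
  obtain ⟨hm1, hm2⟩ := mem_grKernel_iff.mp hm
  obtain ⟨m₀, hm₀, hproj⟩ := mem_projMod_iff.mp hm1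
  have hdet := hfl I hI
  set N := projMod G W M I with hN
  have hmx : m x = m₀ x := by
    rw [← hproj]; simp [projTo_apply, G.le_refl x]
  have hm₀low : ∀ y, G.le y x → y ≠ x → m₀ y = 0 := by
    intro y hy hne
    have h1 : m y = m₀ y := by rw [← hproj]; simp [projTo_apply, hy]
    rw [← h1]; exact hm2 y hne
  have hmem0 : projTo (S := S) G W I m₀ ∈ N := mem_projMod_iff.mpr ⟨m₀, hm₀, rfl⟩
  have hloc : m ∈ locSections G Q W ι N := by
    constructor
    · intro y
      by_cases hyx : y = x
      · subst hyx
        refine mem_projMod_iff.mpr ⟨projTo (S := S) G W I m₀, hmem0, ?_⟩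
        funext z
        by_cases hz : z ∈ ({y} : Set G.Vertex)
        · rw [Set.mem_singleton_iff] at hz
          subst hz
          simp [projTo_apply, Set.mem_singleton_iff, hx, hmx]
        · simp [projTo_apply, hz]
      · have hz : projTo (S := S) G W {y} m = 0 := by
          funext z
          by_cases hzy : z ∈ ({y} : Set G.Vertex)
          · rw [Set.mem_singleton_iff] at hzy
            subst hzy
            simp [projTo_apply, Set.mem_singleton_iff, hm2 z hyx]
          · simp [projTo_apply, hzy]
        rw [hz]
        exact Submodule.zero_mem _
    · intro e
      by_cases hxe : x = G.src e ∨ x = G.tgt e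
      · have hxpair : x ∈ ({G.src e, G.tgt e} : Set G.Vertex) := by
          rcases hxe with h | h <;> simp [h.symm]
        have hn : projTo (S := S) G W {G.src e, G.tgt e}
            (projTo (S := S) G W I m₀) = m := by
          funext z
          by_cases hz : z ∈ ({G.src e, G.tgt e} : Set G.Vertex)
          · by_cases hzx : z = x
            · subst hzx
              simp [projTo_apply, hz, hx, hmx]
            · have hmz : m z = 0 := hm2 z hzx
              by_cases hzI : z ∈ I
              · have hm₀z : m₀ z = 0 := by
                  rcases hxe with hsx | htx
                  · -- x = src e; z must be tgt e
                    have hzt : z = G.tgt e := by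
                      rcases hz with h | h
                      · exact absurd (h.trans hsx.symm) hzx
                      · exact h
                    have hle : G.le x z := by
                      rw [hsx, hzt]; exact G.src_le_tgt e
                    exact hmax z hzI hle hzx m₀ hm₀
                  · -- x = tgt e; z must be src e
                    have hzs : z = G.src e := by
                      rcases hz with h | h
                      · exact h
                      · exact absurd (h.trans htx.symm) hzx
                    have hle : G.le z x := by
                      rw [htx, hzs]; exact G.src_le_tgt e
                    exact hm₀low z hle hzx
                simp [projTo_apply, hz, hzI, hm₀z, hmz]
              · simp [projTo_apply, hz, hzI, hmz]
          · have hzx : z ≠ x := fun h => hz (h ▸ hxpair)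
            simp [projTo_apply, hz, hm2 z hzx]
        have hP : projTo (S := S) G W {G.src e, G.tgt e} m = m := by
          funext z
          by_cases hz : z ∈ ({G.src e, G.tgt e} : Set G.Vertex)
          · simp [projTo_apply, hz]
          · have hzx : z ≠ x := fun h => hz (h ▸ hxpair)
            simp [projTo_apply, hz, hm2 z hzx]
        rw [hP]
        apply Submodule.subset_span
        refine ⟨(1, 1), by simpa using Ideal.zero_mem _,
          projTo (S := S) G W {G.src e, G.tgt e} (projTo (S := S) G W I m₀),
          mem_projMod_iff.mpr ⟨projTo (S := S) G W I m₀, hmem0, rfl⟩, ?_⟩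
        funext y
        simp only [ite_self, map_one, one_smul]
        exact (congrFun hn y).symm
      · push_neg at hxe
        have hz : projTo (S := S) G W {G.src e, G.tgt e} m = 0 := by
          funext z
          by_cases hzp : z ∈ ({G.src e, G.tgt e} : Set G.Vertex)
          · have hzx : z ≠ x := by
              rintro rfl
              rcases hzp with h | h
              · exact hxe.1 h
              · exact hxe.2 h
            simp [projTo_apply, hzp, hm2 z hzx]
          · simp [projTo_apply, hzp]
        rw [hz]
        exact Submodule.zero_mem _
  have : m ∈ (N : Set (∀ y, W y)) := by
    rw [hdet]
    exact hloc
  exact this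

end AuxFlabby

section AuxPrime

lemma exists_good_gamma {k V S : Type} [Field k] [AddCommGroup V] [Module k V]
    [CommRing S] [Algebra k S] (ι : V →ₗ[k] S) (hS : IsSymmAlg k V S ι)
    [Nontrivial V] :
    ∃ γ : V, γ ≠ 0 ∧ ι γ ≠ 0 ∧ (Ideal.span {ι γ}).IsPrime ∧
      ∀ α : V, α ≠ 0 → ι α ∈ Ideal.span {ι γ} → ι γ ∈ Ideal.span {ι α} := by
  classical
  set σ := Module.Basis.ofVectorSpaceIndex k V with hσ
  let b : Module.Basis σ k V := Module.Basis.ofVectorSpace k V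
  let lin : V →ₗ[k] MvPolynomial σ k :=
    (Finsupp.linearCombination k
      (fun i : σ => (MvPolynomial.X i : MvPolynomial σ k))).comp b.repr.toLinearMap
  have hlinb : ∀ i : σ, lin (b i) = MvPolynomial.X i := by
    intro i
    simp [lin, Module.Basis.repr_self, Finsupp.linearCombination_single]
  obtain ⟨ψ, hψ, -⟩ := hS.univ (MvPolynomial σ k) lin
  let χ : MvPolynomial σ k →ₐ[k] S := MvPolynomial.aeval (fun i => ι (b i))
  have hχlin : ∀ v, χ (lin v) = ι v := by
    have h : χ.toLinearMap.comp lin = ι := b.ext fun i => by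
      simp [hlinb i, χ]
    exact fun v => DFunLike.congr_fun h v
  have hχψ : χ.comp ψ = AlgHom.id k S := by
    obtain ⟨θ, -, hθu⟩ := hS.univ S ι
    have h1 : χ.comp ψ = θ := hθu (χ.comp ψ) (fun v => by simp [hψ v, hχlin v])
    have h2 : AlgHom.id k S = θ := hθu (AlgHom.id k S) (fun v => rfl)
    rw [h1, h2]
  have hψχ : ψ.comp χ = AlgHom.id k (MvPolynomial σ k) :=
    MvPolynomial.algHom_ext fun i => by
      simp only [AlgHom.coe_comp, Function.comp_apply, AlgHom.coe_id, id_eq]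
      rw [show χ (MvPolynomial.X i) = ι (b i) by simp [χ], hψ, hlinb]
  let e : S ≃ₐ[k] MvPolynomial σ k := AlgEquiv.ofAlgHom ψ χ hψχ hχψ
  have : Nonempty σ := b.index_nonempty
  obtain ⟨i₀⟩ := this
  set γ := b i₀ with hγ
  have heγ : e (ι γ) = MvPolynomial.X i₀ := by
    show ψ (ι γ) = _
    rw [hψ, hlinb]
  have hine : ι γ ≠ 0 := by
    intro h
    have : e (ι γ) = 0 := by rw [h, map_zero]
    rw [heγ] at this
    exact MvPolynomial.X_ne_zero i₀ this
  have hXprime : Prime (MvPolynomial.X i₀ : MvPolynomial σ k) := by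
    let E : MvPolynomial σ k ≃ₐ[k] Polynomial (MvPolynomial {j : σ // j ≠ i₀} k) :=
      (MvPolynomial.renameEquiv k (Equiv.optionSubtypeNe i₀).symm).trans
        (MvPolynomial.optionEquivLeft k _)
    have hE : E (MvPolynomial.X i₀) = Polynomial.X := by
      simp [E, MvPolynomial.renameEquiv_apply, MvPolynomial.rename_X]
    have : Prime (E (MvPolynomial.X i₀)) := hE ▸ Polynomial.prime_X
    exact (MulEquiv.prime_iff E.toRingEquiv.toMulEquiv).mp this
  have hγprime : Prime (ι γ) := by
    refine (MulEquiv.prime_iff e.toRingEquiv.toMulEquiv).mp ?_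
    show Prime (e (ι γ))
    rw [heγ]
    exact hXprime
  refine ⟨γ, b.ne_zero i₀, hine, (Ideal.span_singleton_prime hine).mpr hγprime, ?_⟩
  intro α hα hmem
  obtain ⟨c, hc⟩ := Ideal.mem_span_singleton'.mp hmem
  have hdvd : MvPolynomial.X i₀ ∣ lin α := by
    refine ⟨e c, ?_⟩
    have : e (ι α) = lin α := hψ α
    rw [← this, ← hc, map_mul, heγ]
    ring
  have hcoord : ∀ i : σ, i ≠ i₀ → b.repr α i = 0 := by
    intro i hi
    obtain ⟨q, hq⟩ := hdvd
    have h := congrArg (MvPolynomial.eval (fun j : σ => if j = i then (1 : k) else 0)) hq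
    have hrhs : MvPolynomial.eval (fun j : σ => if j = i then (1 : k) else 0)
        (MvPolynomial.X i₀ * q) = 0 := by
      rw [map_mul, MvPolynomial.eval_X, if_neg (Ne.symm hi), zero_mul]
    have hlhs : MvPolynomial.eval (fun j : σ => if j = i then (1 : k) else 0)
        (lin α) = b.repr α i := by
      simp only [lin, LinearMap.coe_comp, Function.comp_apply, LinearEquiv.coe_coe,
        Finsupp.linearCombination_apply]
      rw [Finsupp.sum, map_sum]
      have : ∀ j ∈ (b.repr α).support,
          MvPolynomial.eval (fun j : σ => if j = i then (1 : k) else 0)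
            ((b.repr α) j • MvPolynomial.X j)
          = if j = i then b.repr α j else 0 := by
        intro j _
        rw [MvPolynomial.smul_eq_C_mul, map_mul, MvPolynomial.eval_C, MvPolynomial.eval_X]
        by_cases hji : j = i <;> simp [hji]
      rw [Finset.sum_congr rfl this, Finset.sum_ite_eq' (b.repr α).support i
        (fun j => b.repr α j)]
      by_cases hs : i ∈ (b.repr α).support
      · rw [if_pos hs]
      · rw [if_neg hs]
        exact (Finsupp.notMem_support_iff.mp hs).symm
    rw [hlhs, hrhs] at h
    exact h
  have hsingle : b.repr α = Finsupp.single i₀ (b.repr α i₀) := by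
    ext j
    by_cases hj : j = i₀
    · subst hj; rw [Finsupp.single_eq_same]
    · rw [Finsupp.single_eq_of_ne hj]
      exact hcoord j hj
  have hαγ : α = (b.repr α i₀) • γ := by
    have h := b.linearCombination_repr α
    rw [hsingle, Finsupp.linearCombination_single] at h
    exact h.symm
  have hc₀ : b.repr α i₀ ≠ 0 := by
    intro h
    rw [h, zero_smul] at hαγ
    exact hα hαγ
  refine Ideal.mem_span_singleton'.mpr ⟨algebraMap k S (b.repr α i₀)⁻¹, ?_⟩
  rw [← Algebra.smul_def]
  have hι : ι α = (b.repr α i₀) • ι γ := by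
    conv_lhs => rw [hαγ]
    rw [map_smul]
  rw [hι, smul_smul, inv_mul_cancel₀ hc₀, one_smul]

end AuxPrime


section AuxStalk

open scoped Classical

variable {k V S : Type} [Field k] [AddCommGroup V] [Module k V]
variable [CommRing S] [IsDomain S] [Algebra k S]
variable {G : MomentGraph k V}
variable (Q : Type) [CommRing Q] [Algebra S Q]
variable {W : G.Vertex → Type}
variable [∀ x, AddCommGroup (W x)] [∀ x, Module Q (W x)] [∀ x, Module S (W x)]

lemma mem_structSubalg_iff {ι : V →ₗ[k] S} {z : G.Vertex → S} :
    z ∈ structSubalg G S ι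
      ↔ ∀ e, z (G.src e) - z (G.tgt e) ∈ Ideal.span {ι (G.label e)} :=
  Iff.rfl

/-- The key stalk lemma: any stalk value of `M` at `x` has a nonzero multiple
which is the `x`-value of an element of `M^{[x]}`.  Uses quasi-finiteness. -/
lemma exists_smul_mem_grKernel (ι : V →ₗ[k] S) (hS : IsSymmAlg k V S ι)
    (hqf : QuasiFinite ι G)
    {M : Submodule S (∀ x, W x)} (hM : IsCoordModF G Q W ι M)
    {a : ∀ x, W x} (ha : a ∈ M) (x : G.Vertex) :
    ∃ s : S, s ≠ 0 ∧ ∃ g ∈ grKernel G W M x, g x = algebraMap S Q s • a x := by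
  suffices h : ∃ z₀ : G.Vertex → S, z₀ ∈ structSubalg G S ι ∧ z₀ x ≠ 0 ∧
      ∀ y, y ≠ x → z₀ y = 0 ∨ a y = 0 by
    obtain ⟨z₀, hz, hzx, hz0⟩ := h
    set g : ∀ y, W y := fun y => algebraMap S Q (z₀ y) • a y with hg
    have hgM : g ∈ M := hM.1 z₀ hz a ha
    have hsupp : ∀ y, y ≠ x → g y = 0 := by
      intro y hy
      rcases hz0 y hy with h' | h' <;> simp [hg, h']
    refine ⟨z₀ x, hzx, g, ?_, rfl⟩
    refine mem_grKernel_iff.mpr ⟨?_, hsupp⟩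
    refine mem_projMod_iff.mpr ⟨g, hgM, ?_⟩
    funext y
    by_cases hyx : y = x
    · subst hyx
      simp [projTo_apply, G.le_refl y]
    · by_cases hle : G.le y x <;> simp [projTo_apply, hle, hsupp y hyx]
  rcases isEmpty_or_nonempty G.Edge with hE | hE
  · refine ⟨fun y => if y = x then 1 else 0, ?_, by simp, ?_⟩
    · exact mem_structSubalg_iff.mpr fun e => isEmptyElim e
    · intro y hy
      left
      simp [hy]
  · have hV : Nontrivial V := ⟨G.label hE.some, 0, G.label_ne hE.some⟩
    obtain ⟨γ, hγ0, hιγ, hp, hkey⟩ := exists_good_gamma ι hS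
    letI := hp
    set P := Ideal.span {ι γ} with hP
    set I : Set G.Vertex := {y | ∃ m ∈ M, m y ≠ 0} ∪ {x} with hI
    have hIfin : I.Finite := hM.2.2.union (Set.finite_singleton x)
    have hxI : x ∈ I := Or.inr rfl
    obtain ⟨f, hf, -, hrange⟩ := hqf γ hγ0 hp I hIfin
    have hγmem : ∀ e : G.Edge, algebraMap S (Localization P.primeCompl) (ι γ)
        ∈ Ideal.span {algebraMap S (Localization P.primeCompl) (ι (G.label e))} := by
      intro e
      by_cases hm : ι (G.label e) ∈ P
      · obtain ⟨c, hc⟩ := Ideal.mem_span_singleton'.mp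
          (hkey (G.label e) (G.label_ne e) hm)
        exact Ideal.mem_span_singleton'.mpr ⟨algebraMap S (Localization P.primeCompl) c, by rw [← map_mul, hc]⟩
      · have hu : IsUnit (algebraMap S (Localization P.primeCompl) (ι (G.label e))) :=
          IsLocalization.map_units (Localization P.primeCompl) (⟨ι (G.label e), hm⟩ : P.primeCompl)
        rw [Ideal.span_singleton_eq_top.mpr hu]
        exact Submodule.mem_top
    set u : G.Vertex → Localization P.primeCompl := fun y => if y = x then algebraMap S (Localization P.primeCompl) (ι γ) else 0
      with hu_def
    have hu : u ∈ secAlg G (Localization P.primeCompl) (fun v => algebraMap S (Localization P.primeCompl) (ι v)) I := by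
      constructor
      · intro y hy
        have hyx : y ≠ x := fun h => hy (h ▸ hxI)
        simp [hu_def, hyx]
      · intro e _ _
        by_cases hs : G.src e = x
        · have ht : G.tgt e ≠ x := fun h => G.src_ne_tgt e (hs.trans h.symm)
          simp only [hu_def, if_pos hs, if_neg ht, sub_zero]
          exact hγmem e
        · by_cases ht : G.tgt e = x
          · simp only [hu_def, if_neg hs, if_pos ht, zero_sub]
            exact Submodule.neg_mem _ (hγmem e)
          · simp only [hu_def, if_neg hs, if_neg ht, sub_zero]
            exact Submodule.zero_mem _
    have humem : u ∈ LinearMap.range f := by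
      rw [hrange]
      exact hu
    obtain ⟨ξ, hξ⟩ := humem
    have hcd : ∀ ξ : (structAlgRes G S ι I) ⊗[S] Localization P.primeCompl,
        ∃ (m : structAlgRes G S ι I) (t : P.primeCompl),
          algebraMap S (Localization P.primeCompl) t.val • f ξ = fun y => algebraMap S (Localization P.primeCompl) (m.val y) := by
      intro ζ
      induction ζ using TensorProduct.induction_on with
      | zero =>
          refine ⟨0, 1, ?_⟩
          funext y
          simp
      | tmul m s =>
          obtain ⟨⟨a', t⟩, hst⟩ := IsLocalization.surj (M := P.primeCompl) (S := Localization P.primeCompl) s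
          refine ⟨a' • m, t, ?_⟩
          funext y
          rw [hf m s]
          simp only [Pi.smul_apply, smul_eq_mul, Submodule.coe_smul, Pi.smul_apply,
            smul_eq_mul, map_mul]
          calc algebraMap S (Localization P.primeCompl) t.val * (s * algebraMap S (Localization P.primeCompl) (m.val y))
              = (s * algebraMap S (Localization P.primeCompl) t.val) * algebraMap S (Localization P.primeCompl) (m.val y) := by ring
            _ = algebraMap S (Localization P.primeCompl) a' * algebraMap S (Localization P.primeCompl) (m.val y) := by rw [hst]
      | add ζ₁ ζ₂ h₁ h₂ =>
          obtain ⟨m₁, t₁, hm₁⟩ := h₁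
          obtain ⟨m₂, t₂, hm₂⟩ := h₂
          refine ⟨t₂.val • m₁ + t₁.val • m₂, t₁ * t₂, ?_⟩
          funext y
          have e₁ := congrFun hm₁ y
          have e₂ := congrFun hm₂ y
          simp only [Pi.smul_apply, smul_eq_mul] at e₁ e₂
          simp only [map_add, Pi.add_apply, Pi.smul_apply, smul_eq_mul,
            Submodule.coe_add, Submodule.coe_smul, Submonoid.coe_mul, map_mul]
          calc algebraMap S (Localization P.primeCompl) t₁.val * algebraMap S (Localization P.primeCompl) t₂.val * (f ζ₁ y + f ζ₂ y)
              = algebraMap S (Localization P.primeCompl) t₂.val * (algebraMap S (Localization P.primeCompl) t₁.val * f ζ₁ y)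
                + algebraMap S (Localization P.primeCompl) t₁.val * (algebraMap S (Localization P.primeCompl) t₂.val * f ζ₂ y) := by ring
            _ = algebraMap S (Localization P.primeCompl) t₂.val * algebraMap S (Localization P.primeCompl) (m₁.val y)
                + algebraMap S (Localization P.primeCompl) t₁.val * algebraMap S (Localization P.primeCompl) (m₂.val y) := by rw [e₁, e₂]
    obtain ⟨mI, t, hmt⟩ := hcd ξ
    rw [hξ] at hmt
    have hle : P.primeCompl ≤ nonZeroDivisors S := fun c hc =>
      mem_nonZeroDivisors_of_ne_zero (fun h0 => hc (h0 ▸ P.zero_mem))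
    have hinj : Function.Injective (algebraMap S (Localization P.primeCompl)) := IsLocalization.injective (Localization P.primeCompl) hle
    have hvanish : ∀ y, y ≠ x → mI.val y = 0 := by
      intro y hy
      have := congrFun hmt y
      simp only [Pi.smul_apply, smul_eq_mul, hu_def, if_neg hy, mul_zero] at this
      exact hinj (by rw [← this, map_zero])
    have hvx : mI.val x = t.val * ι γ := by
      have := congrFun hmt x
      simp only [Pi.smul_apply, smul_eq_mul, hu_def, if_pos rfl] at this
      apply hinj
      rw [map_mul, ← this]
      simp
    have ht0 : (t : S) ≠ 0 := fun h0 => t.2 (h0 ▸ P.zero_mem)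
    obtain ⟨z₀, hz₀, hz₀eq⟩ := mI.2
    have hres : ∀ y, mI.val y = if y ∈ I then z₀ y else 0 := by
      intro y
      rw [← hz₀eq]
      simp [restrictTo, Set.indicator_apply]
    refine ⟨z₀, ?_, ?_, ?_⟩
    · exact mem_structSubalg_iff.mpr fun e => hz₀.2 e trivial trivial
    · intro h0
      have := hvx
      rw [hres x, if_pos hxI, h0] at this
      exact mul_ne_zero ht0 hιγ this.symm
    · intro y hy
      by_cases hyI : y ∈ I
      · left
        have := hvanish y hy
        rwa [hres y, if_pos hyI] at this
      · right
        by_contra hay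
        exact hyI (Or.inl ⟨a, ha, hay⟩)

end AuxStalk



/-- Let `G` be a quasi-finite moment graph and `A → B → C` a
sequence in `Z-mod^f` with `A`, `B`, `C` flabby.  Then the sequence is short
exact (i.e. `0 → A^I → B^I → C^I → 0` is exact for all open `I`) if and only if
for every vertex `x` the sequence `0 → A^{[x]} → B^{[x]} → C^{[x]} → 0` of
`Z`-modules is short exact. -/
theorem short_exact_iff_exact_on_kernels
    {k V S : Type} [Field k] [AddCommGroup V] [Module k V]
    [CommRing S] [IsDomain S] [Algebra k S] (ι : V →ₗ[k] S)
    (hS : IsSymmAlg k V S ι)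
    (G : MomentGraph k V) (hqf : QuasiFinite ι G)
    (Q : Type) [Field Q] [Algebra S Q] [IsFractionRing S Q]
    (WA WB WC : G.Vertex → Type)
    [∀ x, AddCommGroup (WA x)] [∀ x, Module Q (WA x)]
    [∀ x, Module S (WA x)] [∀ x, IsScalarTower S Q (WA x)]
    [∀ x, AddCommGroup (WB x)] [∀ x, Module Q (WB x)]
    [∀ x, Module S (WB x)] [∀ x, IsScalarTower S Q (WB x)]
    [∀ x, AddCommGroup (WC x)] [∀ x, Module Q (WC x)]
    [∀ x, Module S (WC x)] [∀ x, IsScalarTower S Q (WC x)]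
    (A : Submodule S (∀ x, WA x)) (hA : IsCoordModF G Q WA ι A)
    (B : Submodule S (∀ x, WB x)) (hB : IsCoordModF G Q WB ι B)
    (C : Submodule S (∀ x, WC x)) (hC : IsCoordModF G Q WC ι C)
    (hflA : Flabby G Q WA ι A) (hflB : Flabby G Q WB ι B)
    (hflC : Flabby G Q WC ι C)
    (φ : ∀ x, WA x →ₗ[Q] WB x) (ψ : ∀ x, WB x →ₗ[Q] WC x)
    (hφ : ∀ m ∈ A, pmap (S := S) G Q WA WB φ m ∈ B)
    (hψ : ∀ m ∈ B, pmap (S := S) G Q WB WC ψ m ∈ C) :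
    (∀ I : Set G.Vertex, IsOpenSub G I →
      (∀ m ∈ projMod G WA A I, pmap (S := S) G Q WA WB φ m = 0 → m = 0)
      ∧ (∀ m ∈ projMod G WA A I,
          pmap (S := S) G Q WB WC ψ (pmap (S := S) G Q WA WB φ m) = 0)
      ∧ (∀ m ∈ projMod G WB B I, pmap (S := S) G Q WB WC ψ m = 0 →
          ∃ a ∈ projMod G WA A I, pmap (S := S) G Q WA WB φ a = m)
      ∧ (∀ c ∈ projMod G WC C I,
          ∃ b ∈ projMod G WB B I, pmap (S := S) G Q WB WC ψ b = c))
    ↔ (∀ x : G.Vertex,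
      (∀ m ∈ grKernel G WA A x, pmap (S := S) G Q WA WB φ m = 0 → m = 0)
      ∧ (∀ m ∈ grKernel G WA A x,
          pmap (S := S) G Q WB WC ψ (pmap (S := S) G Q WA WB φ m) = 0)
      ∧ (∀ m ∈ grKernel G WB B x, pmap (S := S) G Q WB WC ψ m = 0 →
          ∃ a ∈ grKernel G WA A x, pmap (S := S) G Q WA WB φ a = m)
      ∧ (∀ c ∈ grKernel G WC C x,
          ∃ b ∈ grKernel G WB B x, pmap (S := S) G Q WB WC ψ b = c)) := by
  classical
  constructor
  · -- forward direction: restrict to the open sets `{≤ x}` and `{< x}`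
    intro hL x
    have hDx : IsOpenSub G {y | G.le y x} := fun a b hab hb => G.le_trans a b x hab hb
    have hDx' : IsOpenSub G {y | G.le y x ∧ y ≠ x} := by
      intro a b hab hb
      refine ⟨G.le_trans a b x hab hb.1, ?_⟩
      rintro rfl
      exact hb.2 (G.le_antisymm b a hb.1 hab)
    obtain ⟨h1, h2, h3, h4⟩ := hL {y | G.le y x} hDx
    obtain ⟨h1', h2', h3', h4'⟩ := hL {y | G.le y x ∧ y ≠ x} hDx'
    have hsub : {y | G.le y x ∧ y ≠ x} ⊆ {y | G.le y x} := fun y hy => hy.1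
    refine ⟨?_, ?_, ?_, ?_⟩
    · intro m hm hf
      exact h1 m (mem_grKernel_iff.mp hm).1 hf
    · intro m hm
      exact h2 m (mem_grKernel_iff.mp hm).1
    · intro m hm hf
      obtain ⟨hm1, hm2⟩ := mem_grKernel_iff.mp hm
      obtain ⟨a, ha, hfa⟩ := h3 m hm1 hf
      have ha' : projTo (S := S) G WA {y | G.le y x ∧ y ≠ x} a
          ∈ projMod G WA A {y | G.le y x ∧ y ≠ x} := projTo_mem_projMod hsub ha
      have hfa' : pmap (S := S) G Q WA WB φ
          (projTo (S := S) G WA {y | G.le y x ∧ y ≠ x} a) = 0 := by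
        rw [pmap_projTo, hfa]
        funext y
        by_cases hy : y ∈ {y | G.le y x ∧ y ≠ x}
        · simp [projTo_apply, hy, hm2 y hy.2]
        · simp [projTo_apply, hy]
      have hz := h1' _ ha' hfa'
      have hav : ∀ y, y ≠ x → a y = 0 := by
        intro y hy
        by_cases hyle : G.le y x
        · have := congrFun hz y
          simpa [projTo_apply, Set.mem_setOf_eq, hyle, hy] using this
        · exact projMod_vanish ha hyle
      exact ⟨a, mem_grKernel_iff.mpr ⟨ha, hav⟩, hfa⟩
    · intro c hc
      obtain ⟨hc1, hc2⟩ := mem_grKernel_iff.mp hc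
      obtain ⟨b, hb, hψb⟩ := h4 c hc1
      have hb' : projTo (S := S) G WB {y | G.le y x ∧ y ≠ x} b
          ∈ projMod G WB B {y | G.le y x ∧ y ≠ x} := projTo_mem_projMod hsub hb
      have hψb' : pmap (S := S) G Q WB WC ψ
          (projTo (S := S) G WB {y | G.le y x ∧ y ≠ x} b) = 0 := by
        rw [pmap_projTo, hψb]
        funext y
        by_cases hy : y ∈ {y | G.le y x ∧ y ≠ x}
        · simp [projTo_apply, hy, hc2 y hy.2]
        · simp [projTo_apply, hy]
      obtain ⟨a', ha', hfa'⟩ := h3' _ hb' hψb'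
      obtain ⟨a₁, ha₁, ha₁p⟩ := mem_projMod_iff.mp ha'
      set b₃ := b - projTo (S := S) G WB {y | G.le y x}
        (pmap (S := S) G Q WA WB φ a₁) with hb₃
      have hb₃B : b₃ ∈ projMod G WB B {y | G.le y x} :=
        Submodule.sub_mem _ hb (mem_projMod_iff.mpr ⟨_, hφ a₁ ha₁, rfl⟩)
      have hb₃v : ∀ y, y ≠ x → b₃ y = 0 := by
        intro y hy
        by_cases hyle : G.le y x
        · have hyD : y ∈ {y | G.le y x ∧ y ≠ x} := ⟨hyle, hy⟩
          have h5 : (pmap (S := S) G Q WA WB φ a₁) y = b y := by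
            have h6 := congrFun hfa' y
            rw [← ha₁p, pmap_projTo] at h6
            simpa [projTo_apply, hyD] using h6
          simp [hb₃, projTo_apply, hyle, h5]
        · have h6 : b y = 0 := projMod_vanish hb hyle
          simp [hb₃, projTo_apply, hyle, h6]
      refine ⟨b₃, mem_grKernel_iff.mpr ⟨hb₃B, hb₃v⟩, ?_⟩
      have hψφ0 : pmap (S := S) G Q WB WC ψ (pmap (S := S) G Q WA WB φ
          (projTo (S := S) G WA {y | G.le y x} a₁)) = 0 :=
        h2 _ (mem_projMod_iff.mpr ⟨a₁, ha₁, rfl⟩)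
      rw [pmap_projTo, pmap_projTo] at hψφ0
      have hψb₃ : pmap (S := S) G Q WB WC ψ b₃
          = pmap (S := S) G Q WB WC ψ b - projTo (S := S) G WC {y | G.le y x}
              (pmap (S := S) G Q WB WC ψ (pmap (S := S) G Q WA WB φ a₁)) := by
        rw [hb₃, map_sub, pmap_projTo]
      rw [hψb₃, hψφ0, hψb, sub_zero]
  · -- backward direction
    intro hR
    -- the union of the supports
    set Ω : Set G.Vertex := {y | ∃ m ∈ A, m y ≠ 0}
      ∪ ({y | ∃ m ∈ B, m y ≠ 0} ∪ {y | ∃ m ∈ C, m y ≠ 0}) with hΩ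
    have hΩfin : Ω.Finite := hA.2.2.union (hB.2.2.union hC.2.2)
    -- ψ ∘ φ kills every stalk value of A, by the stalk lemma
    have hψφA : ∀ a ∈ A,
        pmap (S := S) G Q WB WC ψ (pmap (S := S) G Q WA WB φ a) = 0 := by
      intro a ha
      funext y
      obtain ⟨s, hs, g, hg, hgx⟩ := exists_smul_mem_grKernel Q ι hS hqf hA ha y
      have h0 := (hR y).2.1 g hg
      have h0y := congrFun h0 y
      rw [pmap_apply, pmap_apply, hgx, map_smul, map_smul] at h0y
      have hQ : (algebraMap S Q s) ≠ 0 := fun h =>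
        hs ((IsFractionRing.injective S Q) (by rw [h, map_zero]))
      have h1 := congrArg (fun w => (algebraMap S Q s)⁻¹ • w) h0y
      simp only [Pi.zero_apply, smul_smul, inv_mul_cancel₀ hQ, one_smul,
        smul_zero] at h1
      show ψ y (φ y (a y)) = 0
      exact h1
    have h2glob : ∀ (J : Set G.Vertex), ∀ m ∈ projMod G WA A J,
        pmap (S := S) G Q WB WC ψ (pmap (S := S) G Q WA WB φ m) = 0 := by
      intro J m hm
      obtain ⟨a₀, ha₀, rfl⟩ := mem_projMod_iff.mp hm
      rw [pmap_projTo, pmap_projTo, hψφA a₀ ha₀]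
      funext y
      simp [projTo_apply]
    letI instPO : PartialOrder G.Vertex :=
      { le := G.le, le_refl := G.le_refl, le_trans := G.le_trans,
        le_antisymm := G.le_antisymm }
    have key : ∀ n : ℕ, ∀ J : Set G.Vertex, IsOpenSub G J → (J ∩ Ω).ncard = n →
      (∀ m ∈ projMod G WA A J, pmap (S := S) G Q WA WB φ m = 0 → m = 0)
      ∧ (∀ m ∈ projMod G WA A J,
          pmap (S := S) G Q WB WC ψ (pmap (S := S) G Q WA WB φ m) = 0)
      ∧ (∀ m ∈ projMod G WB B J, pmap (S := S) G Q WB WC ψ m = 0 →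
          ∃ a ∈ projMod G WA A J, pmap (S := S) G Q WA WB φ a = m)
      ∧ (∀ c ∈ projMod G WC C J,
          ∃ b ∈ projMod G WB B J, pmap (S := S) G Q WB WC ψ b = c) := by
      intro n
      induction n using Nat.strong_induction_on with
      | _ n IH =>
        intro J hJ hn
        by_cases hempty : J ∩ Ω = ∅
        · -- base case: nothing lives on J
          have hvan : ∀ y ∈ J, y ∉ Ω → True := fun _ _ _ => trivial
          have hnotΩ : ∀ y ∈ J, y ∉ Ω := fun y hy hyΩ =>
            (Set.eq_empty_iff_forall_notMem.mp hempty y) ⟨hy, hyΩ⟩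
          have hAz : ∀ m ∈ projMod G WA A J, m = 0 := by
            intro m hm
            funext y
            by_cases hyJ : y ∈ J
            · exact projMod_vanish_supp hm (fun nn hnn => by
                by_contra h
                exact hnotΩ y hyJ (Or.inl ⟨nn, hnn, h⟩))
            · exact projMod_vanish hm hyJ
          have hBz : ∀ m ∈ projMod G WB B J, m = 0 := by
            intro m hm
            funext y
            by_cases hyJ : y ∈ J
            · exact projMod_vanish_supp hm (fun nn hnn => by
                by_contra h
                exact hnotΩ y hyJ (Or.inr (Or.inl ⟨nn, hnn, h⟩)))
            · exact projMod_vanish hm hyJ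
          have hCz : ∀ m ∈ projMod G WC C J, m = 0 := by
            intro m hm
            funext y
            by_cases hyJ : y ∈ J
            · exact projMod_vanish_supp hm (fun nn hnn => by
                by_contra h
                exact hnotΩ y hyJ (Or.inr (Or.inr ⟨nn, hnn, h⟩)))
            · exact projMod_vanish hm hyJ
          refine ⟨fun m hm _ => hAz m hm, fun m hm => h2glob J m hm, ?_, ?_⟩
          · intro m hm _
            exact ⟨0, (projMod G WA A J).zero_mem, by rw [map_zero, hBz m hm]⟩
          · intro c hc
            exact ⟨0, (projMod G WB B J).zero_mem, by rw [map_zero, hCz c hc]⟩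
        · -- inductive step
          have hfinJΩ : (J ∩ Ω).Finite := hΩfin.subset Set.inter_subset_right
          obtain ⟨x, hx, hxmax⟩ := Set.Finite.exists_maximalFor id (J ∩ Ω)
            hfinJΩ (Set.nonempty_iff_ne_empty.mpr hempty)
          have hxJ : x ∈ J := hx.1
          set J' := J \ {y | G.le x y} with hJ'def
          have hJ'open : IsOpenSub G J' := by
            intro a b hab hb
            refine ⟨hJ a b hab hb.1, ?_⟩
            intro ha
            exact hb.2 (G.le_trans x a b ha hab)
          have hJ'sub : J' ⊆ J := Set.diff_subset
          have hmaxΩ : ∀ y, y ∈ J → G.le x y → y ≠ x → y ∉ Ω :=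
            fun y hyJ hle hne hyΩ => hne (G.le_antisymm x y hle (hxmax ⟨hyJ, hyΩ⟩ hle)).symm
          have hmaxA : ∀ y, y ∈ J → G.le x y → y ≠ x → ∀ nn ∈ A, nn y = 0 := by
            intro y hyJ hle hne nn hnn
            by_contra h
            exact hmaxΩ y hyJ hle hne (Or.inl ⟨nn, hnn, h⟩)
          have hmaxB : ∀ y, y ∈ J → G.le x y → y ≠ x → ∀ nn ∈ B, nn y = 0 := by
            intro y hyJ hle hne nn hnn
            by_contra h
            exact hmaxΩ y hyJ hle hne (Or.inr (Or.inl ⟨nn, hnn, h⟩))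
          have hmaxC : ∀ y, y ∈ J → G.le x y → y ≠ x → ∀ nn ∈ C, nn y = 0 := by
            intro y hyJ hle hne nn hnn
            by_contra h
            exact hmaxΩ y hyJ hle hne (Or.inr (Or.inr ⟨nn, hnn, h⟩))
          have hJΩ : J' ∩ Ω = (J ∩ Ω) \ {x} := by
            ext y
            constructor
            · rintro ⟨⟨hyJ, hyU⟩, hyΩ⟩
              refine ⟨⟨hyJ, hyΩ⟩, ?_⟩
              intro hyx
              rw [Set.mem_singleton_iff] at hyx
              subst hyx
              exact hyU (G.le_refl y)
            · rintro ⟨⟨hyJ, hyΩ⟩, hyx⟩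
              rw [Set.mem_singleton_iff] at hyx
              refine ⟨⟨hyJ, ?_⟩, hyΩ⟩
              intro hle
              exact hyx (G.le_antisymm x y hle (hxmax ⟨hyJ, hyΩ⟩ hle)).symm
          have hnpos : 0 < n := by
            rw [← hn]
            exact (Set.ncard_pos hfinJΩ).mpr ⟨x, hx⟩
          have hcard' : (J' ∩ Ω).ncard = n - 1 := by
            rw [hJΩ, Set.ncard_diff_singleton_of_mem hx, hn]
          obtain ⟨IH1, IH2, IH3, IH4⟩ := IH (n - 1) (Nat.sub_lt hnpos one_pos)
            J' hJ'open hcard'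
          -- kernel identification helpers
          have hkerA : ∀ m ∈ projMod G WA A J,
              projTo (S := S) G WA J' m = 0 → m ∈ grKernel G WA A x := by
            intro m hm h0
            refine mem_grKernel_of_projMod hJ hxJ hm ?_
            intro y hy
            by_cases hyJ : y ∈ J
            · by_cases hyJ' : y ∈ J'
              · have := congrFun h0 y
                simpa [projTo_apply, hyJ'] using this
              · have hxy : G.le x y := by
                  by_contra h
                  exact hyJ' ⟨hyJ, h⟩
                exact projMod_vanish_supp hm (hmaxA y hyJ hxy hy)
            · exact projMod_vanish hm hyJ
          have hkerB : ∀ m ∈ projMod G WB B J,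
              projTo (S := S) G WB J' m = 0 → m ∈ grKernel G WB B x := by
            intro m hm h0
            refine mem_grKernel_of_projMod hJ hxJ hm ?_
            intro y hy
            by_cases hyJ : y ∈ J
            · by_cases hyJ' : y ∈ J'
              · have := congrFun h0 y
                simpa [projTo_apply, hyJ'] using this
              · have hxy : G.le x y := by
                  by_contra h
                  exact hyJ' ⟨hyJ, h⟩
                exact projMod_vanish_supp hm (hmaxB y hyJ hxy hy)
            · exact projMod_vanish hm hyJ
          have hkerC : ∀ m ∈ projMod G WC C J,
              projTo (S := S) G WC J' m = 0 → m ∈ grKernel G WC C x := by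
            intro m hm h0
            refine mem_grKernel_of_projMod hJ hxJ hm ?_
            intro y hy
            by_cases hyJ : y ∈ J
            · by_cases hyJ' : y ∈ J'
              · have := congrFun h0 y
                simpa [projTo_apply, hyJ'] using this
              · have hxy : G.le x y := by
                  by_contra h
                  exact hyJ' ⟨hyJ, h⟩
                exact projMod_vanish_supp hm (hmaxC y hyJ hxy hy)
            · exact projMod_vanish hm hyJ
          refine ⟨?_, fun m hm => h2glob J m hm, ?_, ?_⟩
          · -- injectivity
            intro m hm h0
            have hm' := projTo_mem_projMod hJ'sub hm
            have h0' : pmap (S := S) G Q WA WB φ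
                (projTo (S := S) G WA J' m) = 0 := by
              rw [pmap_projTo, h0]
              funext y
              simp [projTo_apply]
            have hz := IH1 _ hm' h0'
            exact (hR x).1 m (hkerA m hm hz) h0
          · -- kernel of ψ is the image of φ
            intro m hm h0
            have hm' := projTo_mem_projMod hJ'sub hm
            have h0' : pmap (S := S) G Q WB WC ψ
                (projTo (S := S) G WB J' m) = 0 := by
              rw [pmap_projTo, h0]
              funext y
              simp [projTo_apply]
            obtain ⟨a', ha', hfa'⟩ := IH3 _ hm' h0'
            obtain ⟨a₁, ha₁, ha₁p⟩ := mem_projMod_iff.mp ha'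
            have ha'' : projTo (S := S) G WA J a₁ ∈ projMod G WA A J :=
              mem_projMod_iff.mpr ⟨a₁, ha₁, rfl⟩
            set kk := m - pmap (S := S) G Q WA WB φ
              (projTo (S := S) G WA J a₁) with hkk
            have hkB : kk ∈ projMod G WB B J :=
              Submodule.sub_mem _ hm (pmap_mem_projMod Q φ hφ ha'')
            have hk0 : projTo (S := S) G WB J' kk = 0 := by
              rw [hkk, map_sub, pmap_projTo, projTo_projTo_of_subset WB hJ'sub,
                ← pmap_projTo, ha₁p, hfa', sub_self]
            have hkgr := hkerB kk hkB hk0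
            have hψk : pmap (S := S) G Q WB WC ψ kk = 0 := by
              rw [hkk, map_sub, h0, h2glob J _ ha'', sub_zero]
            obtain ⟨g, hg, hgφ⟩ := (hR x).2.2.1 kk hkgr hψk
            refine ⟨projTo (S := S) G WA J a₁ + g, Submodule.add_mem _ ha''
              (grKernel_le_projMod Q ι hflA hJ hxJ hmaxA hg), ?_⟩
            rw [map_add, hgφ, hkk]
            abel
          · -- surjectivity
            intro c hc
            have hc' := projTo_mem_projMod hJ'sub hc
            obtain ⟨b', hb', hψb'⟩ := IH4 _ hc'
            obtain ⟨b₁, hb₁, hb₁p⟩ := mem_projMod_iff.mp hb'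
            have hb'' : projTo (S := S) G WB J b₁ ∈ projMod G WB B J :=
              mem_projMod_iff.mpr ⟨b₁, hb₁, rfl⟩
            set r := c - pmap (S := S) G Q WB WC ψ
              (projTo (S := S) G WB J b₁) with hr
            have hrC : r ∈ projMod G WC C J :=
              Submodule.sub_mem _ hc (pmap_mem_projMod Q ψ hψ hb'')
            have hr0 : projTo (S := S) G WC J' r = 0 := by
              rw [hr, map_sub, pmap_projTo, projTo_projTo_of_subset WC hJ'sub,
                ← pmap_projTo, hb₁p, hψb', sub_self]
            have hrgr := hkerC r hrC hr0
            obtain ⟨g, hg, hgψ⟩ := (hR x).2.2.2 r hrgr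
            refine ⟨projTo (S := S) G WB J b₁ + g, Submodule.add_mem _ hb''
              (grKernel_le_projMod Q ι hflB hJ hxJ hmaxB hg), ?_⟩
            rw [map_add, hgψ, hr]
            abel
    intro I hI
    exact key ((I ∩ Ω).ncard) I hI rfl

end Stmt13
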